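/- Let $X=ASL_2(\mathbb{R})/ASL_2(\mathbb{Z})$ and define $\alpha_0:X\to[2^{-1/2},\infty)$ by $\alpha_0((h,\xi)\Gamma)=\sup_{w\in\mathbb{Z}^2\setminus\{0\}}\|hw\|^{-1/2}$. Then for every $t\ge20$ and every $x\in X$, $\int_{-1}^{1}\alpha_0(a_t u(s)x)\,ds < \frac14\alpha_0(x) + 2e^t$, where $a_t u(s)$ acts by left multiplication via $(h,\xi)\mapsto(a_tu(s)h, a_tu(s)\xi)$. -/

import Mathlib

open Matrix MeasureTheory

/-- The Euclidean norm on `ℝ²` (viewed as `Fin 2 → ℝ`). -/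
noncomputable def enorm2 (v : Fin 2 → ℝ) : ℝ :=
  Real.sqrt (v 0 ^ 2 + v 1 ^ 2)

/-- The height function `α₀` on the space of affine lattices: for `x = (h,ξ)Γ`,
`α₀(x) = sup_{w ∈ ℤ²∖{0}} ‖hw‖^{-1/2}` (it depends only on the lattice `hℤ²`). -/
noncomputable def alpha0 (h : Matrix (Fin 2) (Fin 2) ℝ) : ℝ :=
  ⨆ w : {w : Fin 2 → ℤ // w ≠ 0},
    enorm2 (h.mulVec fun i => ((w.1 i : ℝ))) ^ (-(1 / 2 : ℝ))

namespace Stmt8Aux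

lemma enorm2_nonneg (v : Fin 2 → ℝ) : 0 ≤ enorm2 v := Real.sqrt_nonneg _

lemma rneg (x : ℝ) (hx : 0 ≤ x) : x ^ (-(1/2 : ℝ)) = (Real.sqrt x)⁻¹ := by
  rw [Real.rpow_neg hx, Real.sqrt_eq_rpow]

lemma inv_sqrt_le {a b : ℝ} (ha : 0 < a) (hab : a ≤ b) :
    (Real.sqrt b)⁻¹ ≤ (Real.sqrt a)⁻¹ :=
  inv_anti₀ (Real.sqrt_pos.mpr ha) (Real.sqrt_le_sqrt hab)

lemma mulVec0 (A : Matrix (Fin 2) (Fin 2) ℝ) (x : Fin 2 → ℝ) :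
    A.mulVec x 0 = A 0 0 * x 0 + A 0 1 * x 1 := by
  simp [Matrix.mulVec, dotProduct, Fin.sum_univ_two]

lemma mulVec1 (A : Matrix (Fin 2) (Fin 2) ℝ) (x : Fin 2 → ℝ) :
    A.mulVec x 1 = A 1 0 * x 0 + A 1 1 * x 1 := by
  simp [Matrix.mulVec, dotProduct, Fin.sum_univ_two]

/-- Sum of squares of the entries. -/
noncomputable def S (A : Matrix (Fin 2) (Fin 2) ℝ) : ℝ :=
  A 0 0 ^ 2 + A 0 1 ^ 2 + A 1 0 ^ 2 + A 1 1 ^ 2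

lemma S_nonneg (A : Matrix (Fin 2) (Fin 2) ℝ) : 0 ≤ S A := by
  unfold S; positivity

lemma two_le_S {A : Matrix (Fin 2) (Fin 2) ℝ} (hA : A.det = 1) : 2 ≤ S A := by
  have hd := A.det_fin_two
  rw [hA] at hd
  unfold S
  nlinarith [sq_nonneg (A 0 0 - A 1 1), sq_nonneg (A 0 1 + A 1 0)]

lemma S_pos {A : Matrix (Fin 2) (Fin 2) ℝ} (hA : A.det = 1) : 0 < S A :=
  lt_of_lt_of_le (by norm_num) (two_le_S hA)

lemma enorm2_mulVec_le (A : Matrix (Fin 2) (Fin 2) ℝ) (x : Fin 2 → ℝ) :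
    enorm2 (A.mulVec x) ≤ Real.sqrt (S A) * enorm2 x := by
  rw [enorm2, enorm2, ← Real.sqrt_mul (S_nonneg A)]
  apply Real.sqrt_le_sqrt
  rw [mulVec0, mulVec1]
  unfold S
  nlinarith [sq_nonneg (A 0 0 * x 1 - A 0 1 * x 0), sq_nonneg (A 1 0 * x 1 - A 1 1 * x 0),
    sq_nonneg (A 0 0 * x 0 + A 0 1 * x 1), sq_nonneg (A 1 0 * x 0 + A 1 1 * x 1)]

lemma enorm2_le_mulVec {A : Matrix (Fin 2) (Fin 2) ℝ} (hA : A.det = 1) (x : Fin 2 → ℝ) :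
    enorm2 x ≤ Real.sqrt (S A) * enorm2 (A.mulVec x) := by
  have hd := A.det_fin_two
  rw [hA] at hd
  rw [enorm2, enorm2, ← Real.sqrt_mul (S_nonneg A)]
  apply Real.sqrt_le_sqrt
  rw [mulVec0, mulVec1]
  set c0 := A 0 0 * x 0 + A 0 1 * x 1 with hc0
  set c1 := A 1 0 * x 0 + A 1 1 * x 1 with hc1
  have hx0 : x 0 = A 1 1 * c0 - A 0 1 * c1 := by
    rw [hc0, hc1]; linear_combination (x 0) * hd
  have hx1 : x 1 = A 0 0 * c1 - A 1 0 * c0 := by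
    rw [hc0, hc1]; linear_combination (x 1) * hd
  rw [hx0, hx1]
  unfold S
  nlinarith [sq_nonneg (A 1 1 * c1 + A 0 1 * c0), sq_nonneg (A 0 0 * c0 + A 1 0 * c1)]

lemma one_le_enorm2_int (w : Fin 2 → ℤ) (hw : w ≠ 0) :
    1 ≤ enorm2 (fun i => (w i : ℝ)) := by
  have hex : w 0 ≠ 0 ∨ w 1 ≠ 0 := by
    by_contra hc
    push_neg at hc
    exact hw (funext fun i => by fin_cases i <;> simp [hc.1, hc.2])
  have h1 : (1 : ℝ) ≤ ((w 0 : ℝ)) ^ 2 + ((w 1 : ℝ)) ^ 2 := by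
    rcases hex with h | h
    · have := Int.one_le_abs h
      have h2 : (1:ℝ) ≤ |(w 0 : ℝ)| := by exact_mod_cast this
      nlinarith [sq_abs ((w 0 : ℝ)), sq_nonneg ((w 1 : ℝ)), abs_nonneg ((w 0:ℝ))]
    · have := Int.one_le_abs h
      have h2 : (1:ℝ) ≤ |(w 1 : ℝ)| := by exact_mod_cast this
      nlinarith [sq_abs ((w 1 : ℝ)), sq_nonneg ((w 0 : ℝ)), abs_nonneg ((w 1:ℝ))]
  rw [enorm2]
  calc (1:ℝ) = Real.sqrt 1 := by simp
  _ ≤ _ := Real.sqrt_le_sqrt (by simpa using h1)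

/-- The summand in `alpha0`. -/
noncomputable def term (A : Matrix (Fin 2) (Fin 2) ℝ) (w : Fin 2 → ℤ) : ℝ :=
  enorm2 (A.mulVec fun i => ((w i : ℝ))) ^ (-(1 / 2 : ℝ))

lemma alpha0_eq (A : Matrix (Fin 2) (Fin 2) ℝ) :
    alpha0 A = ⨆ w : {w : Fin 2 → ℤ // w ≠ 0}, term A w.1 := rfl

instance : Nonempty {w : Fin 2 → ℤ // w ≠ 0} :=
  ⟨⟨![1, 0], by
    intro hc
    have := congrFun hc 0
    simp at this⟩⟩

lemma lattice_lb {A : Matrix (Fin 2) (Fin 2) ℝ} (hA : A.det = 1) (w : Fin 2 → ℤ)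
    (hw : w ≠ 0) : (Real.sqrt (S A))⁻¹ ≤ enorm2 (A.mulVec fun i => ((w i : ℝ))) := by
  have h1 := one_le_enorm2_int w hw
  have h2 := enorm2_le_mulVec hA (fun i => ((w i : ℝ)))
  have hS : 0 < Real.sqrt (S A) := Real.sqrt_pos.mpr (S_pos hA)
  rw [← one_div, div_le_iff₀ hS]
  nlinarith

lemma enorm2_mulVec_int_pos {A : Matrix (Fin 2) (Fin 2) ℝ} (hA : A.det = 1) (w : Fin 2 → ℤ)
    (hw : w ≠ 0) : 0 < enorm2 (A.mulVec fun i => ((w i : ℝ))) :=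
  lt_of_lt_of_le (inv_pos.mpr (Real.sqrt_pos.mpr (S_pos hA))) (lattice_lb hA w hw)

lemma term_le {A : Matrix (Fin 2) (Fin 2) ℝ} (hA : A.det = 1) (w : Fin 2 → ℤ) (hw : w ≠ 0) :
    term A w ≤ Real.sqrt (Real.sqrt (S A)) := by
  rw [term, rneg _ (enorm2_nonneg _)]
  have h4 := inv_sqrt_le (a := (Real.sqrt (S A))⁻¹)
    (inv_pos.mpr (Real.sqrt_pos.mpr (S_pos hA))) (lattice_lb hA w hw)
  rwa [Real.sqrt_inv, inv_inv] at h4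

lemma alpha0_bdd {A : Matrix (Fin 2) (Fin 2) ℝ} (hA : A.det = 1) :
    BddAbove (Set.range fun w : {w : Fin 2 → ℤ // w ≠ 0} => term A w.1) :=
  ⟨Real.sqrt (Real.sqrt (S A)), by rintro x ⟨w, rfl⟩; exact term_le hA w.1 w.2⟩

lemma le_alpha0 {A : Matrix (Fin 2) (Fin 2) ℝ} (hA : A.det = 1) (w : Fin 2 → ℤ)
    (hw : w ≠ 0) : term A w ≤ alpha0 A := by
  rw [alpha0_eq]
  exact le_ciSup (alpha0_bdd hA) ⟨w, hw⟩

lemma alpha0_le {A : Matrix (Fin 2) (Fin 2) ℝ} {C : ℝ}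
    (hC : ∀ w : Fin 2 → ℤ, w ≠ 0 → term A w ≤ C) : alpha0 A ≤ C := by
  rw [alpha0_eq]
  exact ciSup_le fun w => hC w.1 w.2

lemma alpha0_nonneg (A : Matrix (Fin 2) (Fin 2) ℝ) : 0 ≤ alpha0 A := by
  rw [alpha0_eq]
  exact Real.iSup_nonneg fun w => Real.rpow_nonneg (enorm2_nonneg _) _

lemma alpha0_pos {A : Matrix (Fin 2) (Fin 2) ℝ} (hA : A.det = 1) : 0 < alpha0 A := by
  have hw : (![1, 0] : Fin 2 → ℤ) ≠ 0 := by
    intro hc; have := congrFun hc 0; simp at this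
  refine lt_of_lt_of_le ?_ (le_alpha0 hA ![1, 0] hw)
  rw [term, rneg _ (enorm2_nonneg _)]
  have := enorm2_mulVec_int_pos hA ![1, 0] hw
  positivity

lemma exists_good {A : Matrix (Fin 2) (Fin 2) ℝ} {c : ℝ} (hc : c < alpha0 A) :
    ∃ w : Fin 2 → ℤ, w ≠ 0 ∧ c < term A w := by
  rw [alpha0_eq] at hc
  obtain ⟨⟨w, hw⟩, h⟩ := exists_lt_of_lt_ciSup hc
  exact ⟨w, hw, h⟩

lemma cross_le (x y : Fin 2 → ℝ) :
    |x 0 * y 1 - x 1 * y 0| ≤ enorm2 x * enorm2 y := by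
  rw [enorm2, enorm2, ← Real.sqrt_mul (by positivity), ← Real.sqrt_sq_eq_abs]
  exact Real.sqrt_le_sqrt (by nlinarith [sq_nonneg (x 0 * y 0 + x 1 * y 1)])

lemma mulVec_cross (A : Matrix (Fin 2) (Fin 2) ℝ) (x y : Fin 2 → ℝ) :
    A.mulVec x 0 * A.mulVec y 1 - A.mulVec x 1 * A.mulVec y 0
      = A.det * (x 0 * y 1 - x 1 * y 0) := by
  rw [Matrix.det_fin_two, mulVec0, mulVec1, mulVec0, mulVec1]
  ring

lemma enorm2_smul (c : ℝ) (x : Fin 2 → ℝ) :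
    enorm2 (fun i => c * x i) = |c| * enorm2 x := by
  rw [enorm2, enorm2]
  rw [show (c * x 0) ^ 2 + (c * x 1) ^ 2 = c ^ 2 * (x 0 ^ 2 + x 1 ^ 2) by ring,
    Real.sqrt_mul (sq_nonneg c), Real.sqrt_sq_eq_abs]

lemma mulVec_smul' (A : Matrix (Fin 2) (Fin 2) ℝ) (c : ℝ) (x : Fin 2 → ℝ) :
    A.mulVec (fun i => c * x i) = fun i => c * A.mulVec x i := by
  funext i
  fin_cases i <;> simp [mulVec0, mulVec1] <;> ring

lemma abs_fst_le_enorm2 (x : Fin 2 → ℝ) : |x 0| ≤ enorm2 x := by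
  rw [enorm2, ← Real.sqrt_sq_eq_abs]
  exact Real.sqrt_le_sqrt (by nlinarith [sq_nonneg (x 1)])

lemma exists_primitive (v : Fin 2 → ℤ) (hv : v ≠ 0) :
    ∃ u : Fin 2 → ℤ, IsCoprime (u 0) (u 1) ∧ ∃ d : ℤ, 1 ≤ |d| ∧ ∀ i, v i = d * u i := by
  have hex : v 0 ≠ 0 ∨ v 1 ≠ 0 := by
    by_contra hc
    push_neg at hc
    exact hv (funext fun i => by fin_cases i <;> simp [hc.1, hc.2])
  set d : ℤ := (Int.gcd (v 0) (v 1) : ℤ) with hd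
  have hdpos : 0 < Int.gcd (v 0) (v 1) := by
    rcases hex with h | h
    · exact Int.gcd_pos_of_ne_zero_left _ h
    · exact Int.gcd_pos_of_ne_zero_right _ h
  refine ⟨![v 0 / d, v 1 / d], ?_, d, ?_, ?_⟩
  · rw [Int.isCoprime_iff_gcd_eq_one]
    simpa [hd] using Int.gcd_div_gcd_div_gcd (i := v 0) (j := v 1) hdpos
  · have hd1 : (0:ℤ) < d := by rw [hd]; exact_mod_cast hdpos
    rw [abs_of_pos hd1]; omega
  · intro i
    fin_cases i
    · simpa using (Int.mul_ediv_cancel' (Int.gcd_dvd_left (a := v 0) (b := v 1))).symm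
    · simpa using (Int.mul_ediv_cancel' (Int.gcd_dvd_right (a := v 0) (b := v 1))).symm

lemma parallel (u w : Fin 2 → ℤ) (hu : IsCoprime (u 0) (u 1))
    (h0 : w 0 * u 1 - w 1 * u 0 = 0) : ∃ k : ℤ, ∀ i, w i = k * u i := by
  have heq : w 0 * u 1 = w 1 * u 0 := by linarith
  by_cases h00 : u 0 = 0
  · rw [h00] at hu
    have hu1 : IsUnit (u 1) := isCoprime_zero_left.mp hu
    have hune : u 1 ≠ 0 := hu1.ne_zero
    have hw0 : w 0 = 0 := by
      have hz : w 0 * u 1 = 0 := by rw [heq, h00, mul_zero]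
      exact (mul_eq_zero.mp hz).resolve_right hune
    rcases Int.isUnit_iff.mp hu1 with h1 | h1
    · refine ⟨w 1, fun i => ?_⟩
      fin_cases i
      · show w 0 = w 1 * u 0
        rw [hw0, h00, mul_zero]
      · show w 1 = w 1 * u 1
        rw [h1, mul_one]
    · refine ⟨-(w 1), fun i => ?_⟩
      fin_cases i
      · show w 0 = -(w 1) * u 0
        rw [hw0, h00, mul_zero]
      · show w 1 = -(w 1) * u 1
        rw [h1]; ring
  · have hdvd : u 0 ∣ w 0 := hu.dvd_of_dvd_mul_right ⟨w 1, by linarith⟩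
    obtain ⟨k, hk⟩ := hdvd
    refine ⟨k, fun i => ?_⟩
    fin_cases i
    · show w 0 = k * u 0
      rw [hk]; ring
    · show w 1 = k * u 1
      have h2 : u 0 * (w 1) = u 0 * (k * u 1) := by
        rw [show u 0 * w 1 = w 0 * u 1 by linarith, hk]; ring
      exact mul_left_cancel₀ h00 h2


/-- The matrix `aₜu(s)`. -/
noncomputable def Mts (t s : ℝ) : Matrix (Fin 2) (Fin 2) ℝ :=
  !![Real.exp t, Real.exp t * s; 0, Real.exp (-t)]

lemma det_Mts (t s : ℝ) : (Mts t s).det = 1 := by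
  rw [Matrix.det_fin_two, Mts]
  simp [← Real.exp_add]

lemma Mts_mulVec (t s : ℝ) (x : Fin 2 → ℝ) :
    (Mts t s).mulVec x
      = ![Real.exp t * x 0 + Real.exp t * s * x 1, Real.exp (-t) * x 1] := by
  funext i
  fin_cases i <;>
    simp [Mts, Matrix.mulVec, dotProduct, Fin.sum_univ_two]

lemma S_Mts_le (t s : ℝ) (ht : 0 ≤ t) (hs : |s| ≤ 1) :
    Real.sqrt (S (Mts t s)) ≤ 2 * Real.exp t := by
  have hs2 : s ^ 2 ≤ 1 := by nlinarith [sq_abs s, abs_nonneg s]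
  have hba : Real.exp (-t) ≤ Real.exp t := Real.exp_le_exp.mpr (by linarith)
  have h1 : S (Mts t s) ≤ (2 * Real.exp t) ^ 2 := by
    unfold S Mts
    simp only [Matrix.cons_val', Matrix.cons_val_zero, Matrix.cons_val_one, Matrix.head_cons,
      Matrix.empty_val', Matrix.cons_val_fin_one, Matrix.head_fin_const, Matrix.of_apply]
    nlinarith [Real.exp_pos t, Real.exp_pos (-t)]
  calc Real.sqrt (S (Mts t s)) ≤ Real.sqrt ((2 * Real.exp t) ^ 2) := Real.sqrt_le_sqrt h1
  _ = 2 * Real.exp t := Real.sqrt_sq (by positivity)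

lemma first_ge (t s : ℝ) (x : Fin 2 → ℝ) :
    Real.exp t * |x 0 + s * x 1| ≤ enorm2 ((Mts t s).mulVec x) := by
  rw [Mts_mulVec,
    show Real.exp t * x 0 + Real.exp t * s * x 1 = Real.exp t * (x 0 + s * x 1) by ring]
  have h1 := abs_fst_le_enorm2 ![Real.exp t * (x 0 + s * x 1), Real.exp (-t) * x 1]
  simp only [Matrix.cons_val_zero] at h1
  rwa [abs_mul, abs_of_pos (Real.exp_pos t)] at h1

lemma meas_alpha (t : ℝ) (h : Matrix (Fin 2) (Fin 2) ℝ) :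
    Measurable (fun s : ℝ => alpha0 (Mts t s * h)) := by
  have hrw : (fun s : ℝ => alpha0 (Mts t s * h))
      = fun s => ⨆ w : {w : Fin 2 → ℤ // w ≠ 0}, term (Mts t s * h) w.1 := rfl
  rw [hrw]
  apply Measurable.iSup
  intro w
  have hterm : ∀ s : ℝ, term (Mts t s * h) w.1 =
      (Real.sqrt (Real.sqrt
        ((Real.exp t * (h.mulVec (fun i => ((w.1 i : ℝ))) 0)
            + Real.exp t * s * (h.mulVec (fun i => ((w.1 i : ℝ))) 1)) ^ 2
          + (Real.exp (-t) * (h.mulVec (fun i => ((w.1 i : ℝ))) 1)) ^ 2)))⁻¹ := by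
    intro s
    rw [term, rneg _ (enorm2_nonneg _), ← Matrix.mulVec_mulVec, Mts_mulVec, enorm2]
    simp
  simp_rw [hterm]
  fun_prop

lemma abs_rpow_split (x : ℝ) :
    |x| ^ (-(1/2 : ℝ)) = x ^ (-(1/2 : ℝ)) + (-x) ^ (-(1/2 : ℝ)) := by
  have hc : Real.cos (-(1/2 : ℝ) * Real.pi) = 0 := by
    rw [show (-(1/2 : ℝ)) * Real.pi = -(Real.pi / 2) by ring, Real.cos_neg,
      Real.cos_pi_div_two]
  rcases lt_trichotomy x 0 with hx | hx | hx
  · rw [abs_of_neg hx, Real.rpow_def_of_neg hx, hc, mul_zero, zero_add]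
  · rw [hx]
    simp [Real.zero_rpow (by norm_num : (-(1/2 : ℝ)) ≠ 0)]
  · rw [abs_of_pos hx, Real.rpow_def_of_neg (by linarith : -x < 0), hc, mul_zero, add_zero]

lemma sqrt_add_two_le (a : ℝ) : Real.sqrt (a + 2) ≤ Real.sqrt a + 3/2 := by
  rcases le_or_gt a 0 with ha | ha
  · have h1 : Real.sqrt (a + 2) ≤ Real.sqrt 2 := Real.sqrt_le_sqrt (by linarith)
    have h2 : Real.sqrt 2 ≤ 3/2 := by
      nlinarith [Real.sq_sqrt (by norm_num : (0:ℝ) ≤ 2), Real.sqrt_nonneg 2]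
    nlinarith [Real.sqrt_nonneg a]
  · nlinarith [Real.sq_sqrt (by linarith : (0:ℝ) ≤ a + 2), Real.sq_sqrt ha.le,
      Real.sqrt_nonneg a, Real.sqrt_nonneg (a + 2)]

lemma intInt1 (c : ℝ) :
    IntervalIntegrable (fun x : ℝ => (x - c) ^ (-(1/2 : ℝ))) volume (-1) 1 := by
  have h := (intervalIntegral.intervalIntegrable_rpow' (a := -1 - c) (b := 1 - c)
    (by norm_num : (-1:ℝ) < -(1/2 : ℝ))).comp_sub_right c
  rwa [show (-1 - c + c : ℝ) = -1 by ring, show (1 - c + c : ℝ) = 1 by ring] at h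

lemma intInt2 (c : ℝ) :
    IntervalIntegrable (fun x : ℝ => (c - x) ^ (-(1/2 : ℝ))) volume (-1) 1 := by
  have h := (intervalIntegral.intervalIntegrable_rpow' (a := c + 1) (b := c - 1)
    (by norm_num : (-1:ℝ) < -(1/2 : ℝ))).comp_sub_left c
  rwa [show (c - (c + 1) : ℝ) = -1 by ring, show (c - (c - 1) : ℝ) = 1 by ring] at h

lemma integral_shift_bound (c : ℝ) :
    (∫ x in (-1 : ℝ)..1, (x - c) ^ (-(1/2 : ℝ))) ≤ 3 := by
  rw [intervalIntegral.integral_comp_sub_right (fun x : ℝ => x ^ (-(1/2 : ℝ))) c]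
  rw [integral_rpow (Or.inl (by norm_num : (-1:ℝ) < -(1/2 : ℝ)))]
  have he : (-(1/2 : ℝ) + 1) = 1/2 := by norm_num
  rw [he, ← Real.sqrt_eq_rpow, ← Real.sqrt_eq_rpow]
  have h1 := sqrt_add_two_le (-1 - c)
  rw [show (1 : ℝ) - c = (-1 - c) + 2 by ring]
  rw [div_le_iff₀ (by norm_num : (0:ℝ) < 1/2)]
  linarith

lemma integral_shift_bound' (c : ℝ) :
    (∫ x in (-1 : ℝ)..1, (c - x) ^ (-(1/2 : ℝ))) ≤ 3 := by
  rw [intervalIntegral.integral_comp_sub_left (fun x : ℝ => x ^ (-(1/2 : ℝ))) c]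
  rw [integral_rpow (Or.inl (by norm_num : (-1:ℝ) < -(1/2 : ℝ)))]
  have he : (-(1/2 : ℝ) + 1) = 1/2 := by norm_num
  rw [he, ← Real.sqrt_eq_rpow, ← Real.sqrt_eq_rpow]
  have h1 := sqrt_add_two_le (c - 1)
  rw [show (c : ℝ) - -1 = (c - 1) + 2 by ring]
  rw [div_le_iff₀ (by norm_num : (0:ℝ) < 1/2)]
  linarith


lemma key_ge (t s : ℝ) (ht0 : 0 ≤ t) (hs : |s| ≤ 1) (x : Fin 2 → ℝ) :
    enorm2 x ≤ (2 * Real.exp t) * enorm2 ((Mts t s).mulVec x) := by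
  have h1 := enorm2_le_mulVec (det_Mts t s) x
  have h2 := S_Mts_le t s ht0 hs
  nlinarith [enorm2_nonneg ((Mts t s).mulVec x), Real.sqrt_nonneg (S (Mts t s))]

lemma key_le (t s : ℝ) (ht0 : 0 ≤ t) (hs : |s| ≤ 1) (x : Fin 2 → ℝ) :
    enorm2 ((Mts t s).mulVec x) ≤ (2 * Real.exp t) * enorm2 x := by
  have h1 := enorm2_mulVec_le (Mts t s) x
  have h2 := S_Mts_le t s ht0 hs
  nlinarith [enorm2_nonneg x, Real.sqrt_nonneg (S (Mts t s))]

lemma zu_pos (t s : ℝ) (ht0 : 0 ≤ t) (hs : |s| ≤ 1) (x : Fin 2 → ℝ) (hx : 0 < enorm2 x) :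
    0 < enorm2 ((Mts t s).mulVec x) := by
  have := key_ge t s ht0 hs x
  nlinarith [enorm2_nonneg ((Mts t s).mulVec x), Real.exp_pos t]

set_option maxHeartbeats 800000 in
lemma pointwiseA (t s : ℝ) (ht0 : 0 ≤ t) (hs : |s| ≤ 1)
    (h : Matrix (Fin 2) (Fin 2) ℝ) (hdet : h.det = 1) :
    alpha0 (Mts t s * h) ≤ Real.sqrt (2 * Real.exp t) * alpha0 h := by
  have hE : (0:ℝ) < Real.exp t := Real.exp_pos t
  apply alpha0_le
  intro w hw
  rw [term, rneg _ (enorm2_nonneg _), ← Matrix.mulVec_mulVec]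
  have hypos : 0 < enorm2 (h.mulVec (fun i => ((w i : ℝ)))) :=
    enorm2_mulVec_int_pos hdet w hw
  have hle := key_ge t s ht0 hs (h.mulVec (fun i => ((w i : ℝ))))
  have h5 := inv_sqrt_le
    (a := enorm2 (h.mulVec (fun i => ((w i : ℝ)))) / (2 * Real.exp t))
    (b := enorm2 ((Mts t s).mulVec (h.mulVec fun i => ((w i : ℝ)))))
    (by positivity)
    (by rw [div_le_iff₀ (by positivity)]; nlinarith)
  have h6 : (Real.sqrt (enorm2 (h.mulVec (fun i => ((w i : ℝ)))) / (2 * Real.exp t)))⁻¹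
      = Real.sqrt (2 * Real.exp t)
        * (Real.sqrt (enorm2 (h.mulVec (fun i => ((w i : ℝ))))))⁻¹ := by
    rw [Real.sqrt_div hypos.le, inv_div, div_eq_mul_inv]
  have hterm : (Real.sqrt (enorm2 (h.mulVec (fun i => ((w i : ℝ))))))⁻¹ ≤ alpha0 h := by
    have h7 := le_alpha0 hdet w hw
    rwa [term, rneg _ (enorm2_nonneg _)] at h7
  calc (Real.sqrt (enorm2 ((Mts t s).mulVec (h.mulVec fun i => ((w i : ℝ))))))⁻¹
      ≤ (Real.sqrt (enorm2 (h.mulVec (fun i => ((w i : ℝ)))) / (2 * Real.exp t)))⁻¹ := h5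
    _ = Real.sqrt (2 * Real.exp t)
        * (Real.sqrt (enorm2 (h.mulVec (fun i => ((w i : ℝ))))))⁻¹ := h6
    _ ≤ Real.sqrt (2 * Real.exp t) * alpha0 h :=
        mul_le_mul_of_nonneg_left hterm (Real.sqrt_nonneg _)

set_option maxHeartbeats 1000000 in
lemma masterB (t s : ℝ) (ht0 : 0 ≤ t) (hs : |s| ≤ 1)
    (h : Matrix (Fin 2) (Fin 2) ℝ) (hdet : h.det = 1)
    (u : Fin 2 → ℤ) (hu_cop : IsCoprime (u 0) (u 1)) (hu0 : u ≠ 0)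
    (b : Fin 2 → ℝ) (hbdef : b = h.mulVec fun i => ((u i : ℝ)))
    (y : ℝ) (hydef : y = enorm2 b) (hypos : 0 < y)
    (hysmall : y < 4 * Real.exp (-t)) :
    alpha0 (Mts t s * h) ≤ (Real.sqrt (enorm2 ((Mts t s).mulVec b)))⁻¹ + 3 := by
  have hE : (0:ℝ) < Real.exp t := Real.exp_pos t
  have hbpos : 0 < enorm2 b := hydef ▸ hypos
  have hzupos : 0 < enorm2 ((Mts t s).mulVec b) := zu_pos t s ht0 hs b hbpos
  apply alpha0_le
  intro w hw
  rw [term, rneg _ (enorm2_nonneg _), ← Matrix.mulVec_mulVec]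
  by_cases hD : w 0 * u 1 - w 1 * u 0 = 0
  · obtain ⟨k, hk⟩ := parallel u w hu_cop hD
    have hk0 : k ≠ 0 := by
      intro h0
      apply hw
      funext i
      simp [hk i, h0]
    have hcast : (fun i => ((w i : ℝ))) = fun i => (k:ℝ) * ((u i : ℝ)) := by
      funext i; rw [hk i]; push_cast; ring
    have heq : enorm2 ((Mts t s).mulVec (h.mulVec fun i => ((w i : ℝ))))
        = |(k:ℝ)| * enorm2 ((Mts t s).mulVec b) := by
      rw [hcast, mulVec_smul', mulVec_smul', enorm2_smul, hbdef]
    have h1k : (1:ℝ) ≤ |(k:ℝ)| := by exact_mod_cast Int.one_le_abs hk0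
    refine le_trans (inv_sqrt_le hzupos ?_) (le_add_of_nonneg_right (by norm_num))
    rw [heq]
    nlinarith
  · have hdetA : (Mts t s * h).det = 1 := by
      rw [Matrix.det_mul, det_Mts, hdet, one_mul]
    have hD1 : (1:ℝ) ≤ |((w 0 : ℝ)) * ((u 1 : ℝ)) - ((w 1 : ℝ)) * ((u 0 : ℝ))| := by
      have h1 : (1:ℤ) ≤ |w 0 * u 1 - w 1 * u 0| := Int.one_le_abs hD
      have h2 : ((|w 0 * u 1 - w 1 * u 0| : ℤ) : ℝ)
          = |((w 0 : ℝ)) * ((u 1 : ℝ)) - ((w 1 : ℝ)) * ((u 0 : ℝ))| := by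
        push_cast; ring_nf
      rw [← h2]; exact_mod_cast h1
    have hcross := mulVec_cross (Mts t s * h) (fun i => ((w i : ℝ))) (fun i => ((u i : ℝ)))
    rw [hdetA, one_mul] at hcross
    have hCS := cross_le ((Mts t s * h).mulVec (fun i => ((w i : ℝ))))
      ((Mts t s * h).mulVec (fun i => ((u i : ℝ))))
    rw [hcross] at hCS
    have hAu : (Mts t s * h).mulVec (fun i => ((u i : ℝ))) = (Mts t s).mulVec b := by
      rw [← Matrix.mulVec_mulVec, hbdef]
    rw [hAu] at hCS
    have hzu_le : enorm2 ((Mts t s).mulVec b) ≤ 8 := by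
      have h1 := key_le t s ht0 hs b
      have h2 : Real.exp t * Real.exp (-t) = 1 := by
        rw [← Real.exp_add]; simp
      nlinarith [hydef ▸ hysmall, hbpos]
    have hz_lb : (1:ℝ)/8 ≤ enorm2 ((Mts t s * h).mulVec (fun i => ((w i : ℝ)))) := by
      have h3 : (1:ℝ) ≤ enorm2 ((Mts t s * h).mulVec (fun i => ((w i : ℝ))))
          * enorm2 ((Mts t s).mulVec b) := le_trans hD1 hCS
      nlinarith [enorm2_nonneg ((Mts t s * h).mulVec (fun i => ((w i : ℝ))))]
    have h4 : (Real.sqrt (enorm2 ((Mts t s * h).mulVec fun i => ((w i : ℝ)))))⁻¹ ≤ 3 := by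
      have h5 := inv_sqrt_le (a := (1:ℝ)/8) (by norm_num) hz_lb
      have h6 : (Real.sqrt ((1:ℝ)/8))⁻¹ ≤ 3 := by
        rw [show ((1:ℝ)/8) = (8:ℝ)⁻¹ by norm_num, Real.sqrt_inv, inv_inv]
        nlinarith [Real.sq_sqrt (by norm_num : (0:ℝ) ≤ 8), Real.sqrt_nonneg 8]
      linarith
    have hrw : (Mts t s).mulVec (h.mulVec fun i => ((w i : ℝ)))
        = (Mts t s * h).mulVec (fun i => ((w i : ℝ))) := Matrix.mulVec_mulVec _ _ _
    rw [hrw]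
    have h9 : 0 ≤ (Real.sqrt (enorm2 ((Mts t s).mulVec b)))⁻¹ := by positivity
    linarith

lemma pointwiseB1 (t s : ℝ) (hs : |s| ≤ 1)
    (b : Fin 2 → ℝ) (y : ℝ) (hydef : y = enorm2 b) (hypos : 0 < y)
    (hbcase : 2 * |b 1| < |b 0|) :
    (Real.sqrt (enorm2 ((Mts t s).mulVec b)))⁻¹
      ≤ 2 * (Real.exp (t/2))⁻¹ * (Real.sqrt y)⁻¹ := by
  have hE : (0:ℝ) < Real.exp t := Real.exp_pos t
  have hQpos : (0:ℝ) < Real.exp (t/2) := Real.exp_pos _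
  have hQQ : Real.exp (t/2) * Real.exp (t/2) = Real.exp t := by
    rw [← Real.exp_add]; norm_num
  have hsqrtE : Real.sqrt (Real.exp t) = Real.exp (t/2) := by
    rw [← hQQ]; exact Real.sqrt_mul_self hQpos.le
  have hsq : y ^ 2 = b 0 ^ 2 + b 1 ^ 2 := by
    rw [hydef, enorm2]; exact Real.sq_sqrt (by positivity)
  have hb0 : y ≤ 2 * |b 0| := by
    nlinarith [abs_nonneg (b 0), abs_nonneg (b 1), sq_abs (b 0), sq_abs (b 1)]
  have hlow : Real.exp t * (y/4) ≤ enorm2 ((Mts t s).mulVec b) := by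
    have h1 := first_ge t s b
    have h2 : |b 0| - |s * b 1| ≤ |b 0 + s * b 1| := by
      have h3 := abs_add_le (b 0 + s * b 1) (-(s * b 1))
      simp only [add_neg_cancel_right, abs_neg] at h3
      linarith
    have h3 : |s * b 1| ≤ |b 1| := by
      rw [abs_mul]
      nlinarith [abs_nonneg (b 1)]
    nlinarith
  have h4 := inv_sqrt_le (show (0:ℝ) < Real.exp t * (y/4) by positivity) hlow
  have h5 : (Real.sqrt (Real.exp t * (y/4)))⁻¹
      = 2 * (Real.exp (t/2))⁻¹ * (Real.sqrt y)⁻¹ := by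
    have hsqrt4 : Real.sqrt 4 = 2 := by
      rw [show (4:ℝ) = 2^2 by norm_num, Real.sqrt_sq (by norm_num : (0:ℝ) ≤ 2)]
    rw [show Real.exp t * (y/4) = (Real.exp t * y)/4 by ring,
      Real.sqrt_div (by positivity), Real.sqrt_mul hE.le, hsqrt4, hsqrtE,
      inv_div, div_eq_mul_inv, mul_inv]
    ring
  rw [h5] at h4
  exact h4

lemma pointwiseB2 (t s : ℝ)
    (b : Fin 2 → ℝ) (hb1ne : b 1 ≠ 0)
    (c : ℝ) (hcdef : c = -(b 0) / (b 1)) (hsc : s ≠ c) :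
    (Real.sqrt (enorm2 ((Mts t s).mulVec b)))⁻¹
      ≤ (Real.exp (t/2))⁻¹ * (Real.sqrt |b 1|)⁻¹
          * ((s - c) ^ (-(1/2:ℝ)) + (c - s) ^ (-(1/2:ℝ))) := by
  have hE : (0:ℝ) < Real.exp t := Real.exp_pos t
  have hQpos : (0:ℝ) < Real.exp (t/2) := Real.exp_pos _
  have hQQ : Real.exp (t/2) * Real.exp (t/2) = Real.exp t := by
    rw [← Real.exp_add]; norm_num
  have hsqrtE : Real.sqrt (Real.exp t) = Real.exp (t/2) := by
    rw [← hQQ]; exact Real.sqrt_mul_self hQpos.le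
  have hfact : b 0 + s * b 1 = b 1 * (s - c) := by
    rw [hcdef]; field_simp; ring
  have habs : 0 < |b 1| * |s - c| :=
    mul_pos (abs_pos.mpr hb1ne) (abs_pos.mpr (sub_ne_zero.mpr hsc))
  have hlow : Real.exp t * (|b 1| * |s - c|) ≤ enorm2 ((Mts t s).mulVec b) := by
    have h1 := first_ge t s b
    rwa [hfact, abs_mul] at h1
  have h4 := inv_sqrt_le (by positivity) hlow
  have h5 : (Real.sqrt (Real.exp t * (|b 1| * |s - c|)))⁻¹
      = (Real.exp (t/2))⁻¹ * (Real.sqrt |b 1|)⁻¹ * |s - c| ^ (-(1/2:ℝ)) := by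
    rw [Real.sqrt_mul hE.le, Real.sqrt_mul (abs_nonneg _), hsqrtE,
      rneg _ (abs_nonneg _), mul_inv, mul_inv]
    ring
  have h6 : |s - c| ^ (-(1/2:ℝ)) = (s - c) ^ (-(1/2:ℝ)) + (c - s) ^ (-(1/2:ℝ)) := by
    rw [abs_rpow_split (s - c), neg_sub]
  rw [h5, h6] at h4
  exact le_of_le_of_eq h4 (by ring)

lemma Fintegrable (K c : ℝ) :
    IntegrableOn (fun s : ℝ =>
      K * ((s - c) ^ (-(1/2:ℝ)) + (c - s) ^ (-(1/2:ℝ))) + 3) (Set.Icc (-1:ℝ) 1) volume := by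
  rw [← intervalIntegrable_iff_integrableOn_Icc_of_le (by norm_num : (-1:ℝ) ≤ 1)]
  exact (((intInt1 c).add (intInt2 c)).const_mul K).add intervalIntegrable_const

lemma Fintegral_le (K c : ℝ) (hK : 0 ≤ K) :
    (∫ s in Set.Icc (-1:ℝ) 1,
        (K * ((s - c) ^ (-(1/2:ℝ)) + (c - s) ^ (-(1/2:ℝ))) + 3)) ≤ K * 6 + 6 := by
  rw [integral_Icc_eq_integral_Ioc,
    ← intervalIntegral.integral_of_le (by norm_num : (-1:ℝ) ≤ 1)]
  rw [intervalIntegral.integral_add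
    (((intInt1 c).add (intInt2 c)).const_mul K) intervalIntegrable_const]
  rw [intervalIntegral.integral_const_mul]
  rw [intervalIntegral.integral_add (intInt1 c) (intInt2 c),
    intervalIntegral.integral_const]
  have hI1 := integral_shift_bound c
  have hI2 := integral_shift_bound' c
  have hs1 : ((1:ℝ) - (-1)) • (3:ℝ) = 6 := by norm_num
  rw [hs1]
  nlinarith

lemma Kbound (b : Fin 2 → ℝ) (y : ℝ) (hydef : y = enorm2 b) (hypos : 0 < y)
    (hbcase : |b 0| ≤ 2 * |b 1|) :
    (Real.sqrt |b 1|)⁻¹ ≤ 2 * (Real.sqrt y)⁻¹ := by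
  have hsq : y ^ 2 = b 0 ^ 2 + b 1 ^ 2 := by
    rw [hydef, enorm2]; exact Real.sq_sqrt (by positivity)
  have h1 : y ≤ 3 * |b 1| := by
    nlinarith [sq_abs (b 0), sq_abs (b 1), abs_nonneg (b 0), abs_nonneg (b 1)]
  have h3 := inv_sqrt_le (show (0:ℝ) < y/3 by positivity) (by linarith : y/3 ≤ |b 1|)
  have h4 : (Real.sqrt (y/3))⁻¹ = Real.sqrt 3 * (Real.sqrt y)⁻¹ := by
    rw [Real.sqrt_div hypos.le, inv_div, div_eq_mul_inv]
  have h5 : Real.sqrt 3 ≤ 2 := by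
    nlinarith [Real.sq_sqrt (by norm_num : (0:ℝ) ≤ 3), Real.sqrt_nonneg 3]
  rw [h4] at h3
  have h6 : (0:ℝ) ≤ (Real.sqrt y)⁻¹ := by positivity
  nlinarith

end Stmt8Aux

open Stmt8Aux in
set_option maxHeartbeats 1000000 in
theorem stmt_8 (t : ℝ) (ht : 20 ≤ t) (h : Matrix (Fin 2) (Fin 2) ℝ) (hdet : h.det = 1) :
    (∫ s in Set.Icc (-1 : ℝ) 1,
        alpha0 (!![Real.exp t, Real.exp t * s; 0, Real.exp (-t)] * h)) <
      (1 / 4) * alpha0 h + 2 * Real.exp t := by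
  classical
  have hE : (0:ℝ) < Real.exp t := Real.exp_pos t
  have ht0 : (0:ℝ) ≤ t := by linarith
  have hQpos : (0:ℝ) < Real.exp (t/2) := Real.exp_pos _
  have hQQ : Real.exp (t/2) * Real.exp (t/2) = Real.exp t := by
    rw [← Real.exp_add]; norm_num
  have hQ48 : (48:ℝ) ≤ Real.exp (t/2) := by
    have h1 : (7/2:ℝ) ≤ Real.exp (5/2) := by
      have := Real.add_one_le_exp (5/2:ℝ); linarith
    have h2 : Real.exp (((4:ℕ):ℝ) * (5/2:ℝ)) = Real.exp (5/2) ^ (4:ℕ) :=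
      Real.exp_nat_mul _ 4
    have h4 : ((4:ℕ) : ℝ) * (5/2 : ℝ) = 10 := by norm_num
    rw [h4] at h2
    have h3 : Real.exp (10:ℝ) ≤ Real.exp (t/2) := Real.exp_le_exp.mpr (by linarith)
    have h5 : ((7/2:ℝ))^(4:ℕ) ≤ Real.exp (5/2) ^ (4:ℕ) :=
      pow_le_pow_left₀ (by norm_num) h1 4
    calc (48:ℝ) ≤ (7/2)^(4:ℕ) := by norm_num
    _ ≤ Real.exp (5/2) ^ (4:ℕ) := h5
    _ = Real.exp 10 := h2.symm
    _ ≤ Real.exp (t/2) := h3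
  have hQinv : (Real.exp (t/2))⁻¹ ≤ 1/48 := by
    rw [show (1:ℝ)/48 = (48:ℝ)⁻¹ by norm_num]
    exact inv_anti₀ (by norm_num) hQ48
  have hE21 : (21:ℝ) ≤ Real.exp t := by
    have := Real.add_one_le_exp t; linarith
  have h9 : (6:ℝ) < 2 * Real.exp t := by
    have h10 : (2:ℝ) * 21 ≤ 2 * Real.exp t :=
      mul_le_mul_of_nonneg_left hE21 (by norm_num : (0:ℝ) ≤ 2)
    calc (6:ℝ) < 2 * 21 := by norm_num
    _ ≤ 2 * Real.exp t := h10
  have hmeasIcc : MeasurableSet (Set.Icc (-1:ℝ) 1) := measurableSet_Icc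
  have hvolIcc : volume (Set.Icc (-1:ℝ) 1) < ⊤ := by
    rw [Real.volume_Icc]; exact ENNReal.ofReal_lt_top
  have hvol2 : (volume (Set.Icc (-1:ℝ) 1)).toReal = 2 := by
    rw [Real.volume_Icc, ENNReal.toReal_ofReal (by norm_num)]; norm_num
  have hαpos : 0 < alpha0 h := alpha0_pos hdet
  have hshow : (∫ s in Set.Icc (-1 : ℝ) 1,
      alpha0 (!![Real.exp t, Real.exp t * s; 0, Real.exp (-t)] * h))
      = ∫ s in Set.Icc (-1:ℝ) 1, alpha0 (Mts t s * h) := rfl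
  rw [hshow]
  by_cases hcase : alpha0 h ≤ Real.exp (t/2) / 2
  · -- SMALL CASE
    have hpt : ∀ s ∈ Set.Icc (-1:ℝ) 1, alpha0 (Mts t s * h) ≤ Real.exp t := by
      intro s hs
      have h1 := pointwiseA t s ht0 (abs_le.mpr ⟨hs.1, hs.2⟩) h hdet
      have h2 : Real.sqrt (2 * Real.exp t) = Real.sqrt 2 * Real.exp (t/2) := by
        rw [Real.sqrt_mul (by norm_num), show Real.sqrt (Real.exp t) = Real.exp (t/2) by
          rw [← hQQ]; exact Real.sqrt_mul_self hQpos.le]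
      have h8 : Real.sqrt 2 ≤ 2 := by
        nlinarith [Real.sq_sqrt (by norm_num : (0:ℝ) ≤ 2), Real.sqrt_nonneg 2]
      have h3 : Real.sqrt (2 * Real.exp t) * alpha0 h ≤ Real.exp t := by
        rw [h2]
        have h4 : Real.sqrt 2 * Real.exp (t/2) * alpha0 h
            ≤ Real.sqrt 2 * Real.exp (t/2) * (Real.exp (t/2) / 2) :=
          mul_le_mul_of_nonneg_left hcase (by positivity)
        have h5 : Real.sqrt 2 * Real.exp (t/2) * (Real.exp (t/2) / 2) ≤ Real.exp t := by
          nlinarith [Real.sqrt_nonneg 2, hQpos]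
        linarith
      linarith
    have hb := norm_setIntegral_le_of_norm_le_const (μ := volume) hvolIcc
      (C := Real.exp t) (fun x hx => by
        rw [Real.norm_eq_abs, abs_of_nonneg (alpha0_nonneg _)]
        exact hpt x hx)
    rw [Measure.real, hvol2, Real.norm_eq_abs] at hb
    have habs := le_abs_self (∫ s in Set.Icc (-1:ℝ) 1, alpha0 (Mts t s * h))
    have hq : (0:ℝ) < 1/4 * alpha0 h := by positivity
    calc (∫ s in Set.Icc (-1:ℝ) 1, alpha0 (Mts t s * h))
        ≤ |∫ s in Set.Icc (-1:ℝ) 1, alpha0 (Mts t s * h)| := habs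
      _ ≤ Real.exp t * 2 := hb
      _ < 1/4 * alpha0 h + 2 * Real.exp t := by linarith
  · -- LARGE CASE
    push_neg at hcase
    obtain ⟨v, hv0, hv⟩ := exists_good (show Real.exp (t/2)/2 < alpha0 h from hcase)
    obtain ⟨u, hu_cop, d, hd1, hdu⟩ := exists_primitive v hv0
    have hu0 : u ≠ 0 := by
      intro h0
      rw [h0] at hu_cop
      simp only [Pi.zero_apply] at hu_cop
      exact not_isCoprime_zero_zero hu_cop
    obtain ⟨b, hbdef⟩ : ∃ b : Fin 2 → ℝ, b = h.mulVec (fun i => ((u i : ℝ))) := ⟨_, rfl⟩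
    obtain ⟨y, hydef⟩ : ∃ y : ℝ, y = enorm2 b := ⟨_, rfl⟩
    have hypos : 0 < y := by
      rw [hydef, hbdef]; exact enorm2_mulVec_int_pos hdet u hu0
    have hyα : (Real.sqrt y)⁻¹ ≤ alpha0 h := by
      have h7 := le_alpha0 hdet u hu0
      rw [term, rneg _ (enorm2_nonneg _)] at h7
      rw [hydef, hbdef]
      exact h7
    -- y is very small
    have hysmall : y < 4 * Real.exp (-t) := by
      have hveq : enorm2 (h.mulVec (fun i => ((v i : ℝ)))) = |(d:ℝ)| * y := by
        have hc : (fun i => ((v i : ℝ))) = fun i => (d:ℝ) * ((u i : ℝ)) := by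
          funext i; rw [hdu i]; push_cast; ring
        rw [hc, mulVec_smul', enorm2_smul, hydef, hbdef]
      rw [term, rneg _ (enorm2_nonneg _), hveq] at hv
      have hd1' : (1:ℝ) ≤ |(d:ℝ)| := by exact_mod_cast hd1
      have h2 : (Real.sqrt (|(d:ℝ)| * y))⁻¹ ≤ (Real.sqrt y)⁻¹ :=
        inv_sqrt_le hypos (by nlinarith)
      have h3 : Real.exp (t/2)/2 < (Real.sqrt y)⁻¹ := lt_of_lt_of_le hv h2
      have hsy : 0 < Real.sqrt y := Real.sqrt_pos.mpr hypos
      have h4 : Real.sqrt y * (Real.exp (t/2)/2) < 1 := by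
        have h5 := mul_lt_mul_of_pos_left h3 hsy
        rwa [mul_inv_cancel₀ hsy.ne'] at h5
      have h4b : Real.sqrt y * Real.exp (t/2) < 2 := by nlinarith
      have h6 := Real.sq_sqrt hypos.le
      have h8 : y * (Real.exp (t/2) * Real.exp (t/2)) < 4 := by
        nlinarith [mul_pos hsy hQpos]
      rw [hQQ] at h8
      have h7 : Real.exp (-t) = (Real.exp t)⁻¹ := Real.exp_neg t
      rw [h7, ← div_eq_mul_inv, lt_div_iff₀ hE]
      exact h8
    have hmain : ∀ s ∈ Set.Icc (-1:ℝ) 1,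
        alpha0 (Mts t s * h) ≤ (Real.sqrt (enorm2 ((Mts t s).mulVec b)))⁻¹ + 3 :=
      fun s hs => masterB t s ht0 (abs_le.mpr ⟨hs.1, hs.2⟩) h hdet u hu_cop hu0
        b hbdef y hydef hypos hysmall
    by_cases hbcase : |b 0| ≤ 2 * |b 1|
    · -- B2 : singular integral case
      have hb1ne : b 1 ≠ 0 := by
        intro h0
        rw [h0] at hbcase
        simp only [abs_zero, mul_zero, abs_nonpos_iff] at hbcase
        have hy0 : y = 0 := by
          rw [hydef, enorm2, hbcase, h0]; simp
        exact hypos.ne' hy0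
      obtain ⟨c, hcdef⟩ : ∃ c : ℝ, c = -(b 0) / (b 1) := ⟨_, rfl⟩
      obtain ⟨K, hKdef⟩ : ∃ K : ℝ, K = (Real.exp (t/2))⁻¹ * (Real.sqrt |b 1|)⁻¹ :=
        ⟨_, rfl⟩
      have hKpos : 0 ≤ K := by rw [hKdef]; positivity
      have hptF : ∀ s ∈ Set.Icc (-1:ℝ) 1, s ≠ c → alpha0 (Mts t s * h)
          ≤ K * ((s - c) ^ (-(1/2:ℝ)) + (c - s) ^ (-(1/2:ℝ))) + 3 := by
        intro s hs hsc
        have h1 := pointwiseB2 t s b hb1ne c hcdef hsc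
        rw [← hKdef] at h1
        exact le_trans (hmain s hs) (by linarith)
      have hiF := Fintegrable K c
      have haec : ∀ᵐ s ∂(volume.restrict (Set.Icc (-1:ℝ) 1)), s ≠ c := by
        apply ae_restrict_of_ae
        rw [ae_iff]
        have h0 : {a : ℝ | ¬a ≠ c} = {c} := by
          ext a; simp [not_not]
        rw [h0]
        exact measure_singleton c
      have haeb : ∀ᵐ s ∂(volume.restrict (Set.Icc (-1:ℝ) 1)),
          alpha0 (Mts t s * h)
            ≤ K * ((s - c) ^ (-(1/2:ℝ)) + (c - s) ^ (-(1/2:ℝ))) + 3 := by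
        filter_upwards [haec, ae_restrict_mem hmeasIcc] with s h1 h2
        exact hptF s h2 h1
      have hif : IntegrableOn (fun s => alpha0 (Mts t s * h)) (Set.Icc (-1:ℝ) 1) volume := by
        apply Integrable.mono' hiF ((meas_alpha t h).aestronglyMeasurable.restrict)
        filter_upwards [haeb] with s h1
        rw [Real.norm_eq_abs, abs_of_nonneg (alpha0_nonneg _)]
        exact h1
      have hIle : (∫ s in Set.Icc (-1:ℝ) 1, alpha0 (Mts t s * h))
          ≤ ∫ s in Set.Icc (-1:ℝ) 1,
              (K * ((s - c) ^ (-(1/2:ℝ)) + (c - s) ^ (-(1/2:ℝ))) + 3) :=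
        integral_mono_ae hif hiF haeb
      have hFval := Fintegral_le K c hKpos
      have hKb : K ≤ (Real.exp (t/2))⁻¹ * (2 * alpha0 h) := by
        rw [hKdef]
        apply mul_le_mul_of_nonneg_left _ (by positivity)
        have h1 := Kbound b y hydef hypos hbcase
        have h2 : 2 * (Real.sqrt y)⁻¹ ≤ 2 * alpha0 h := by linarith
        calc (Real.sqrt |b 1|)⁻¹ ≤ 2 * (Real.sqrt y)⁻¹ := h1
          _ ≤ 2 * alpha0 h := h2
      have hfin : K * 6 + 6 < 1/4 * alpha0 h + 2 * Real.exp t := by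
        have h1 : K * 6 ≤ ((Real.exp (t/2))⁻¹ * (2 * alpha0 h)) * 6 :=
          mul_le_mul_of_nonneg_right hKb (by norm_num)
        have h2 : (Real.exp (t/2))⁻¹ * (2 * alpha0 h) ≤ (1/48) * (2 * alpha0 h) :=
          mul_le_mul_of_nonneg_right hQinv (by positivity)
        have h3 : ((Real.exp (t/2))⁻¹ * (2 * alpha0 h)) * 6
            ≤ ((1/48) * (2 * alpha0 h)) * 6 :=
          mul_le_mul_of_nonneg_right h2 (by norm_num)
        have h4 : ((1/48:ℝ) * (2 * alpha0 h)) * 6 = (1/4) * alpha0 h := by ring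
        have h5 : K * 6 ≤ 1/4 * alpha0 h := le_trans h1 (le_trans h3 (le_of_eq h4))
        exact add_lt_add_of_le_of_lt h5 h9
      exact lt_of_le_of_lt (le_trans hIle hFval) hfin
    · -- B1 : bounded case
      push_neg at hbcase
      have hpt : ∀ s ∈ Set.Icc (-1:ℝ) 1,
          alpha0 (Mts t s * h) ≤ 2 * (Real.exp (t/2))⁻¹ * (Real.sqrt y)⁻¹ + 3 := by
        intro s hs
        have h1 := pointwiseB1 t s (abs_le.mpr ⟨hs.1, hs.2⟩) b y hydef hypos hbcase
        exact le_trans (hmain s hs) (by linarith)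
      have hb := norm_setIntegral_le_of_norm_le_const (μ := volume) hvolIcc
        (C := 2 * (Real.exp (t/2))⁻¹ * (Real.sqrt y)⁻¹ + 3) (fun x hx => by
          rw [Real.norm_eq_abs, abs_of_nonneg (alpha0_nonneg _)]
          exact hpt x hx)
      rw [Measure.real, hvol2, Real.norm_eq_abs] at hb
      have habs := le_abs_self (∫ s in Set.Icc (-1:ℝ) 1, alpha0 (Mts t s * h))
      have h3 : (0:ℝ) ≤ (Real.sqrt y)⁻¹ := by positivity
      have h4 : (Real.exp (t/2))⁻¹ * (Real.sqrt y)⁻¹ ≤ (1/48) * alpha0 h :=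
        mul_le_mul hQinv hyα h3 (by norm_num)
      have h5 : (2 * (Real.exp (t/2))⁻¹ * (Real.sqrt y)⁻¹ + 3) * 2
          ≤ 1/4 * alpha0 h + 6 := by
        have h6 : (2 * (Real.exp (t/2))⁻¹ * (Real.sqrt y)⁻¹ + 3) * 2
            = 4 * ((Real.exp (t/2))⁻¹ * (Real.sqrt y)⁻¹) + 6 := by ring
        have h7 : 4 * ((Real.exp (t/2))⁻¹ * (Real.sqrt y)⁻¹) ≤ 4 * ((1/48) * alpha0 h) :=
          mul_le_mul_of_nonneg_left h4 (by norm_num)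
        have h8 : 4 * ((1/48:ℝ) * alpha0 h) ≤ 1/4 * alpha0 h := by
          calc 4 * ((1/48:ℝ) * alpha0 h) = (1/12) * alpha0 h := by ring
          _ ≤ 1/4 * alpha0 h := mul_le_mul_of_nonneg_right (by norm_num) hαpos.le
        rw [h6]
        exact add_le_add (le_trans h7 h8) (le_refl 6)
      calc (∫ s in Set.Icc (-1:ℝ) 1, alpha0 (Mts t s * h))
          ≤ |∫ s in Set.Icc (-1:ℝ) 1, alpha0 (Mts t s * h)| := habs
        _ ≤ (2 * (Real.exp (t/2))⁻¹ * (Real.sqrt y)⁻¹ + 3) * 2 := hb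
        _ ≤ 1/4 * alpha0 h + 6 := h5
        _ < 1/4 * alpha0 h + 2 * Real.exp t := add_lt_add_right h9 _
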